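/- Let G be connected on n vertices and u a vertex with tr(u) = max_w tr(w). Then the vector x defined by x_u = 1 and x_v = 1 − r·γ(G) for v at distance r from u satisfies ∑_v x_v = 0, ‖x‖_∞ = 1, and max_{vw ∈ E(G)} |x_v − x_w| = γ(G). -/

import Mathlib

open Finset SimpleGraph

/-- `max_{uv ∈ E(G)} |x_u - x_v|` (as a real supremum over adjacent pairs). -/
noncomputable def edgeSup {V : Type*} (G : SimpleGraph V) (x : V → ℝ) : ℝ :=
  ⨆ p : {p : V × V // G.Adj p.1 p.2}, |x p.1.1 - x p.1.2|

/-- The `l_∞`-smoothing parameter `γ(G)`. -/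
noncomputable def gamma {V : Type*} [Fintype V] (G : SimpleGraph V) : ℝ :=
  sInf {y | ∃ x : V → ℝ, (∑ v, x v) = 0 ∧ (⨆ v, |x v|) = 1 ∧ y = edgeSup G x}

/-- Transmission of a vertex: sum of graph distances to all vertices. -/
noncomputable def transmission {V : Type*} [Fintype V] (G : SimpleGraph V) (u : V) : ℕ :=
  ∑ v, G.dist u v

namespace Stmt5Aux

variable {V : Type*} [Fintype V] {G : SimpleGraph V}

lemma bdd (x : V → ℝ) :
    BddAbove (Set.range fun p : {p : V × V // G.Adj p.1 p.2} => |x p.1.1 - x p.1.2|) :=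
  Set.Finite.bddAbove (Set.finite_range _)

lemma abs_le_edgeSup (x : V → ℝ) {v w : V} (h : G.Adj v w) :
    |x v - x w| ≤ edgeSup G x :=
  le_ciSup (bdd x) (⟨(v, w), h⟩ : {p : V × V // G.Adj p.1 p.2})

lemma walk_bound (x : V → ℝ) {v w : V} (p : G.Walk v w) :
    |x v - x w| ≤ p.length * edgeSup G x := by
  induction p with
  | nil => simp
  | @cons a b c h q ih =>
    calc |x a - x c| ≤ |x a - x b| + |x b - x c| := abs_sub_le _ _ _
      _ ≤ edgeSup G x + q.length * edgeSup G x :=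
          add_le_add (abs_le_edgeSup x h) ih
      _ = ((q.length + 1 : ℕ) : ℝ) * edgeSup G x := by push_cast; ring
      _ = _ := by rw [SimpleGraph.Walk.length_cons]

lemma dist_bound (hc : G.Connected) (x : V → ℝ) (v w : V) :
    |x v - x w| ≤ (G.dist v w : ℝ) * edgeSup G x := by
  obtain ⟨p, hp⟩ := hc.exists_walk_length_eq_dist v w
  simpa [hp] using walk_bound x p

end Stmt5Aux

theorem stmt5 {V : Type*} [Fintype V] (G : SimpleGraph V) (hc : G.Connected)
    (hn : 2 ≤ Fintype.card V) (u : V)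
    (hu : ∀ w : V, transmission G w ≤ transmission G u) :
    (∑ v, (1 - (G.dist u v : ℝ) * gamma G)) = 0 ∧
    (⨆ v : V, |1 - (G.dist u v : ℝ) * gamma G|) = 1 ∧
    edgeSup G (fun v => 1 - (G.dist u v : ℝ) * gamma G) = gamma G := by
  classical
  have hneV : Nonempty V := Fintype.card_pos_iff.mp (by omega)
  obtain ⟨v0, hv0⟩ : ∃ v : V, v ≠ u := Fintype.exists_ne_of_one_lt_card (by omega) u
  -- u has a neighbor
  obtain ⟨b, hb⟩ : ∃ b, G.Adj u b := by
    obtain ⟨p⟩ := hc u v0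
    cases p with
    | nil => exact absurd rfl hv0.symm
    | cons h q => exact ⟨_, h⟩
  have hnePairs : Nonempty {p : V × V // G.Adj p.1 p.2} := ⟨⟨(u, b), hb⟩⟩
  set n : ℕ := Fintype.card V with hn_def
  set T : ℕ := transmission G u with hT_def
  have hTpos : 0 < T := by
    have h1 : 0 < G.dist u v0 := hc.pos_dist_of_ne (Ne.symm hv0)
    have : G.dist u v0 ≤ T :=
      Finset.single_le_sum (f := fun v => G.dist u v) (fun _ _ => Nat.zero_le _)
        (Finset.mem_univ v0)
    omega
  have hTR : (0 : ℝ) < (T : ℝ) := by exact_mod_cast hTpos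
  set γ₀ : ℝ := (n : ℝ) / (T : ℝ) with hγ₀
  have hγ₀pos : 0 < γ₀ := by
    apply div_pos _ hTR
    exact_mod_cast (by omega : 0 < n)
  -- key inequality : n * dist u v ≤ 2 * T
  have hkey : ∀ v : V, (n : ℕ) * G.dist u v ≤ 2 * T := by
    intro v
    have h1 : ∀ w : V, G.dist u v ≤ G.dist u w + G.dist w v := fun w =>
      hc.dist_triangle
    calc n * G.dist u v = ∑ _w : V, G.dist u v := by
          rw [Finset.sum_const, Finset.card_univ, smul_eq_mul]
      _ ≤ ∑ w : V, (G.dist u w + G.dist w v) := Finset.sum_le_sum fun w _ => h1 w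
      _ = T + transmission G v := by
          rw [Finset.sum_add_distrib]
          congr 1
          simp only [transmission]
          exact Finset.sum_congr rfl fun w _ => SimpleGraph.dist_comm
      _ ≤ T + T := by have := hu v; omega
      _ = 2 * T := by ring
  have hdγ₀ : ∀ v : V, (G.dist u v : ℝ) * γ₀ ≤ 2 := by
    intro v
    rw [hγ₀, mul_div_assoc', div_le_iff₀ hTR]
    have h := Nat.cast_le (α := ℝ) |>.mpr (hkey v)
    push_cast at h
    linarith
  set x : V → ℝ := fun v => 1 - (G.dist u v : ℝ) * γ₀ with hx
  -- properties of x
  have hsum : (∑ v, x v) = 0 := by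
    simp only [hx, Finset.sum_sub_distrib, Finset.sum_const, Finset.card_univ,
      ← Finset.sum_mul]
    have : (∑ v, (G.dist u v : ℝ)) = (T : ℝ) := by
      rw [hT_def, transmission]; push_cast; ring
    rw [this, hγ₀, nsmul_eq_mul, mul_one, ← hn_def]
    field_simp
    ring
  have hxu : x u = 1 := by simp [hx]
  have habs : ∀ v, |x v| ≤ 1 := by
    intro v
    have h0 : 0 ≤ (G.dist u v : ℝ) * γ₀ := mul_nonneg (by positivity) hγ₀pos.le
    have h2 := hdγ₀ v
    rw [hx, abs_le]
    constructor <;> simp only <;> linarith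
  have hsup : (⨆ v : V, |x v|) = 1 := by
    apply le_antisymm
    · exact ciSup_le habs
    · have := le_ciSup (Set.Finite.bddAbove (Set.finite_range fun v => |x v|)) u
      rw [hxu] at this
      simpa using this
  have hedge : edgeSup G x = γ₀ := by
    apply le_antisymm
    · apply ciSup_le
      rintro ⟨⟨v, w⟩, hvw⟩
      have h1 : G.dist u w ≤ G.dist u v + 1 := by
        have := SimpleGraph.dist_le (G := G) (SimpleGraph.Walk.cons hvw.symm
          (SimpleGraph.Walk.nil : G.Walk v v)).reverse
        have h2 : G.dist u w ≤ G.dist u v + G.dist v w := hc.dist_triangle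
        have h3 : G.dist v w = 1 := SimpleGraph.dist_eq_one_iff_adj.mpr hvw
        omega
      have h2 : G.dist u v ≤ G.dist u w + 1 := by
        have h2 : G.dist u v ≤ G.dist u w + G.dist w v := hc.dist_triangle
        have h3 : G.dist w v = 1 := SimpleGraph.dist_eq_one_iff_adj.mpr hvw.symm
        omega
      have hd : |(G.dist u w : ℝ) - (G.dist u v : ℝ)| ≤ 1 := by
        rw [abs_le]
        constructor
        · have : (G.dist u v : ℝ) ≤ (G.dist u w : ℝ) + 1 := by exact_mod_cast h2
          linarith
        · have : (G.dist u w : ℝ) ≤ (G.dist u v : ℝ) + 1 := by exact_mod_cast h1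
          linarith
      have : x v - x w = ((G.dist u w : ℝ) - (G.dist u v : ℝ)) * γ₀ := by
        simp only [hx]; ring
      rw [this, abs_mul, abs_of_pos hγ₀pos]
      nlinarith [abs_nonneg ((G.dist u w : ℝ) - (G.dist u v : ℝ))]
    · have hb1 : G.dist u b = 1 := SimpleGraph.dist_eq_one_iff_adj.mpr hb
      have := Stmt5Aux.abs_le_edgeSup x hb
      have hval : |x u - x b| = γ₀ := by
        simp [hx, hb1, SimpleGraph.dist_self, abs_of_pos hγ₀pos]
      rwa [hval] at this
  -- gamma G = γ₀
  have hlb : ∀ y ∈ {y | ∃ x : V → ℝ, (∑ v, x v) = 0 ∧ (⨆ v, |x v|) = 1 ∧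
      y = edgeSup G x}, γ₀ ≤ y := by
    rintro y ⟨z, hzsum, hzsup, rfl⟩
    obtain ⟨w, hw⟩ := Finite.exists_max fun v => |z v|
    have hwz : |z w| = 1 := by
      rw [← hzsup]
      exact le_antisymm (le_ciSup (f := fun v => |z v|) (Set.Finite.bddAbove (Set.finite_range _)) w)
        (ciSup_le hw)
    have hS0 : 0 ≤ edgeSup G z := by
      have := Stmt5Aux.abs_le_edgeSup z hb
      exact (abs_nonneg _).trans this
    have hchain : (n : ℝ) ≤ (T : ℝ) * edgeSup G z := by
      calc (n : ℝ) = |(n : ℝ) * z w| := by rw [abs_mul, hwz, mul_one, Nat.abs_cast]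
        _ = |∑ v, (z w - z v)| := by
            rw [Finset.sum_sub_distrib, hzsum, sub_zero, Finset.sum_const,
              Finset.card_univ, nsmul_eq_mul, ← hn_def]
        _ ≤ ∑ v, |z w - z v| := Finset.abs_sum_le_sum_abs _ _
        _ ≤ ∑ v, (G.dist w v : ℝ) * edgeSup G z :=
            Finset.sum_le_sum fun v _ => Stmt5Aux.dist_bound hc z w v
        _ = (transmission G w : ℝ) * edgeSup G z := by
            rw [← Finset.sum_mul, transmission]; push_cast; ring
        _ ≤ (T : ℝ) * edgeSup G z := by
            apply mul_le_mul_of_nonneg_right _ hS0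
            exact_mod_cast hu w
    rw [hγ₀, div_le_iff₀ hTR]
    linarith
  have hmem : γ₀ ∈ {y | ∃ x : V → ℝ, (∑ v, x v) = 0 ∧ (⨆ v, |x v|) = 1 ∧
      y = edgeSup G x} := ⟨x, hsum, hsup, hedge.symm⟩
  have hgamma : gamma G = γ₀ :=
    le_antisymm (csInf_le ⟨γ₀, hlb⟩ hmem) (le_csInf ⟨γ₀, hmem⟩ hlb)
  rw [hgamma]
  exact ⟨hsum, hsup, hedge⟩
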